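/- If a coloured graph contains a repetitively coloured non-boring walk, then it contains a repetitively coloured non-boring walk whose set of vertices has size k and whose length is at most 2k², where k is the minimum number of distinct vertices over all repetitively coloured non-boring walks. -/
import Mathlib


/-- `v 0, …, v (n-1)` is a walk in `G`. -/
def IsWalkSeq {V : Type*} (G : SimpleGraph V) (n : ℕ) (v : ℕ → V) : Prop :=
  ∀ i, i + 1 < n → G.Adj (v i) (v (i + 1))

/-- `(v 0, …, v (2t-1))` is a repetitively coloured non-boring walk in `G`. -/
def RepetitiveNonboringWalk {V C : Type*} (G : SimpleGraph V) (φ : V → C)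
    (t : ℕ) (v : ℕ → V) : Prop :=
  0 < t ∧ IsWalkSeq G (2 * t) v ∧ (∀ i < t, φ (v i) = φ (v (t + i))) ∧
    ∃ i < t, v i ≠ v (t + i)

/-- The order of the walk `(v 0, …, v (2t-1))`: its number of distinct vertices. -/
def walkOrder {V : Type*} [DecidableEq V] (t : ℕ) (v : ℕ → V) : ℕ :=
  ((Finset.range (2 * t)).image v).card

lemma key_cut {V C : Type*} [DecidableEq V] (G : SimpleGraph V) (φ : V → C) (t i j : ℕ)
    (v : ℕ → V) (hv : RepetitiveNonboringWalk G φ t v)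
    (hij : i < j) (hjt : j < t)
    (h1 : v i = v j) (h2 : v (t + i) = v (t + j)) :
    ∃ s u, RepetitiveNonboringWalk G φ s u ∧ s < t ∧
      ((Finset.range (2 * s)).image u) ⊆ ((Finset.range (2 * t)).image v) := by
  classical
  set d := j - i with hd
  set t' := t - d with ht'
  have hd0 : 0 < d := by omega
  have hdj : i + d = j := by omega
  have htd : t' + d = t := by omega
  have hit' : i < t' := by omega
  have ht'0 : 0 < t' := by omega
  set w : ℕ → V := fun r => if r < i then v r else if r < t' + i then v (r + d) else v (r + 2 * d)
    with hw
  have hw1 : ∀ r, r < i → w r = v r := by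
    intro r hr; simp only [hw]; rw [if_pos hr]
  have hw2 : ∀ r, i ≤ r → r < t' + i → w r = v (r + d) := by
    intro r ha hb; simp only [hw]; rw [if_neg (by omega : ¬ r < i), if_pos hb]
  have hw3 : ∀ r, t' + i ≤ r → w r = v (r + 2 * d) := by
    intro r ha; simp only [hw]; rw [if_neg (by omega : ¬ r < i), if_neg (by omega : ¬ r < t' + i)]
  obtain ⟨hpos, hwalk, hcol, hnb⟩ := hv
  by_cases hbor : ∀ r < t', w r = w (t' + r)
  · -- the cut-out walk is boring, use the middle pieces
    have hb1 : ∀ s, s < i → v s = v (t + s) := by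
      intro s hs
      have := hbor s (by omega)
      rwa [hw1 s hs, hw2 (t' + s) (by omega) (by omega),
        show t' + s + d = t + s by omega] at this
    have hb2 : ∀ s, j ≤ s → s < t → v s = v (t + s) := by
      intro s hs1 hs2
      have := hbor (s - d) (by omega)
      rwa [hw2 (s - d) (by omega) (by omega), show s - d + d = s by omega,
        hw3 (t' + (s - d)) (by omega), show t' + (s - d) + 2 * d = t + s by omega] at this
    set u : ℕ → V := fun r => if r < d then v (i + r) else v (t + i + (r - d)) with hu
    have hu1 : ∀ r, r < d → u r = v (i + r) := by
      intro r hr; simp only [hu]; rw [if_pos hr]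
    have hu2 : ∀ r, d ≤ r → u r = v (t + i + (r - d)) := by
      intro r hr; simp only [hu]; rw [if_neg (by omega : ¬ r < d)]
    refine ⟨d, u, ⟨hd0, ?_, ?_, ?_⟩, by omega, ?_⟩
    · -- walk
      intro r hr
      rcases lt_trichotomy (r + 1) d with h | h | h
      · rw [hu1 r (by omega), hu1 (r + 1) h]
        exact hwalk (i + r) (by omega)
      · rw [hu1 r (by omega), hu2 (r + 1) (by omega), show r + 1 - d = 0 by omega]
        have e : v (t + i + 0) = v (i + r + 1) := by
          have e1 : v (t + i) = v j := h2.trans (hb2 j le_rfl hjt).symm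
          rw [show t + i + 0 = t + i by omega, e1, show i + r + 1 = j by omega]
        rw [e]
        exact hwalk (i + r) (by omega)
      · rw [hu2 r (by omega), hu2 (r + 1) (by omega), show r + 1 - d = (r - d) + 1 by omega,
          show t + i + (r - d + 1) = (t + i + (r - d)) + 1 by ring]
        exact hwalk (t + i + (r - d)) (by omega)
    · -- colours
      intro r hr
      rw [hu1 r hr, hu2 (d + r) (by omega), show d + r - d = r by omega,
        show t + i + r = t + (i + r) by omega]
      exact hcol (i + r) (by omega)
    · -- nonboring
      obtain ⟨s, hs, hne⟩ := hnb
      have hsi : i ≤ s := by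
        by_contra hc
        exact hne (hb1 s (by omega))
      have hsj : s < j := by
        by_contra hc
        exact hne (hb2 s (by omega) hs)
      refine ⟨s - i, by omega, ?_⟩
      rw [hu1 (s - i) (by omega), hu2 (d + (s - i)) (by omega),
        show d + (s - i) - d = s - i by omega, show i + (s - i) = s by omega,
        show t + i + (s - i) = t + s by omega]
      exact hne
    · -- subset
      intro x hx
      simp only [Finset.mem_image, Finset.mem_range] at hx ⊢
      obtain ⟨r, hr, hrx⟩ := hx
      rcases lt_or_ge r d with h | h
      · exact ⟨i + r, by omega, by rwa [hu1 r h] at hrx⟩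
      · exact ⟨t + i + (r - d), by omega, by rwa [hu2 r h] at hrx⟩
  · -- the cut-out walk is non-boring, use it
    push_neg at hbor
    refine ⟨t', w, ⟨ht'0, ?_, ?_, hbor⟩, by omega, ?_⟩
    · -- walk
      intro r hr
      rcases lt_trichotomy (r + 1) i with h | h | h
      · rw [hw1 r (by omega), hw1 (r + 1) h]
        exact hwalk r (by omega)
      · rw [hw1 r (by omega), hw2 (r + 1) (by omega) (by omega)]
        have e : v (r + 1 + d) = v (r + 1) := by
          rw [show r + 1 + d = j by omega, ← h1, h]
        rw [e]
        exact hwalk r (by omega)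
      · rcases lt_trichotomy (r + 1) (t' + i) with h' | h' | h'
        · rw [hw2 r (by omega) (by omega), hw2 (r + 1) (by omega) h',
            show r + 1 + d = (r + d) + 1 by ring]
          exact hwalk (r + d) (by omega)
        · rw [hw2 r (by omega) (by omega), hw3 (r + 1) (by omega)]
          have e : v (r + 1 + 2 * d) = v ((r + d) + 1) := by
            rw [show r + 1 + 2 * d = t + j by omega, ← h2, show r + d + 1 = t + i by omega]
          rw [e]
          exact hwalk (r + d) (by omega)
        · rw [hw3 r (by omega), hw3 (r + 1) (by omega),
            show r + 1 + 2 * d = (r + 2 * d) + 1 by ring]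
          exact hwalk (r + 2 * d) (by omega)
    · -- colours
      intro r hr
      rcases lt_or_ge r i with h | h
      · rw [hw1 r h, hw2 (t' + r) (by omega) (by omega), show t' + r + d = t + r by omega]
        exact hcol r (by omega)
      · rw [hw2 r h (by omega), hw3 (t' + r) (by omega),
          show t' + r + 2 * d = t + (r + d) by omega]
        exact hcol (r + d) (by omega)
    · -- subset
      intro x hx
      simp only [Finset.mem_image, Finset.mem_range] at hx ⊢
      obtain ⟨r, hr, hrx⟩ := hx
      rcases lt_or_ge r i with h | h
      · exact ⟨r, by omega, by rwa [hw1 r h] at hrx⟩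
      · rcases lt_or_ge r (t' + i) with h' | h'
        · exact ⟨r + d, by omega, by rwa [hw2 r h h'] at hrx⟩
        · exact ⟨r + 2 * d, by omega, by rwa [hw3 r h'] at hrx⟩

theorem short_repetitive_nonboring_walk' {V C : Type*} [DecidableEq V]
    (G : SimpleGraph V) (φ : V → C) (k : ℕ)
    (hex : ∃ t v, RepetitiveNonboringWalk G φ t v ∧ ((Finset.range (2*t)).image v).card = k)
    (hmin : ∀ t v, RepetitiveNonboringWalk G φ t v → k ≤ ((Finset.range (2*t)).image v).card) :
    ∃ t v, RepetitiveNonboringWalk G φ t v ∧ ((Finset.range (2*t)).image v).card = k ∧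
      2 * t ≤ 2 * k ^ 2 := by
  classical
  have hP : ∃ t, ∃ v, RepetitiveNonboringWalk G φ t v ∧
      ((Finset.range (2*t)).image v).card = k := hex
  obtain ⟨v, hv, hvk⟩ := Nat.find_spec hP
  set t0 := Nat.find hP with ht0
  refine ⟨t0, v, hv, hvk, ?_⟩
  have ht : t0 ≤ k ^ 2 := by
    by_contra hcon
    push_neg at hcon
    set S := (Finset.range (2 * t0)).image v with hS
    have hmaps : ∀ a ∈ Finset.range t0, (v a, v (t0 + a)) ∈ S ×ˢ S := by
      intro a ha
      simp only [Finset.mem_range] at ha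
      refine Finset.mem_product.2 ⟨?_, ?_⟩ <;>
        exact Finset.mem_image.2 ⟨_, Finset.mem_range.2 (by omega), rfl⟩
    have hcard : (S ×ˢ S).card < (Finset.range t0).card := by
      rw [Finset.card_product, hvk, Finset.card_range]
      nlinarith [hcon]
    obtain ⟨a, ha, b, hb, hab, heq⟩ :=
      Finset.exists_ne_map_eq_of_card_lt_of_maps_to hcard hmaps
    simp only [Finset.mem_range] at ha hb
    rw [Prod.mk.injEq] at heq
    obtain ⟨e1, e2⟩ := heq
    -- wlog a < b
    obtain ⟨i, j, hij, hjt, f1, f2⟩ : ∃ i j, i < j ∧ j < t0 ∧ v i = v j ∧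
        v (t0 + i) = v (t0 + j) := by
      rcases lt_or_gt_of_ne hab with h | h
      · exact ⟨a, b, h, hb, e1, e2⟩
      · exact ⟨b, a, h, ha, e1.symm, e2.symm⟩
    obtain ⟨s, u, hu, hst, hsub⟩ := key_cut G φ t0 i j v hv hij hjt f1 f2
    have hks : ((Finset.range (2*s)).image u).card = k :=
      le_antisymm (hvk ▸ Finset.card_le_card hsub) (hmin s u hu)
    exact Nat.find_min hP hst ⟨u, hu, hks⟩
  nlinarith [ht]

/-- If a coloured graph contains a repetitively coloured non-boring walk, and `k` is the
minimum order of such a walk, then there is one of order `k` and length at most `2k²`. -/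
theorem short_repetitive_nonboring_walk {V C : Type*} [DecidableEq V]
    (G : SimpleGraph V) (φ : V → C) (k : ℕ)
    (hex : ∃ t v, RepetitiveNonboringWalk G φ t v ∧ walkOrder t v = k)
    (hmin : ∀ t v, RepetitiveNonboringWalk G φ t v → k ≤ walkOrder t v) :
    ∃ t v, RepetitiveNonboringWalk G φ t v ∧ walkOrder t v = k ∧ 2 * t ≤ 2 * k ^ 2 := by
  simp only [walkOrder] at hex hmin ⊢
  exact short_repetitive_nonboring_walk' G φ k hex hmin
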